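/- Let p be an odd prime and d ≥ 1, and let A_5 ⊆ {1,...,p-1} be any subset with |A_5| = (p-1)/2 such that x ∈ A_5 implies p - x ∉ A_5. Then d_{A_5}((Z/pZ)^d) = 2d+1. -/

import Mathlib

/-- A sequence `g` admits a nonempty subsequence with a zero linear combination
with coefficients drawn from `A` (with repetition allowed). -/
def hasZeroComb {G : Type*} [AddCommGroup G] (A : Finset ℕ) {k : ℕ} (g : Fin k → G) : Prop :=
  ∃ s : Finset (Fin k), s.Nonempty ∧ ∃ a : Fin k → ℕ,
    (∀ i ∈ s, a i ∈ A) ∧ ∑ i ∈ s, a i • g i = 0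


open Finset

section IdealLemmas
variable {R : Type*} [CommRing R]

lemma myPowEqBotMono {I : Ideal R} {a b : ℕ} (h : I ^ a = ⊥) (hab : a ≤ b) : I ^ b = ⊥ := by
  have hb : I ^ b = I ^ a * I ^ (b - a) := by rw [← pow_add, Nat.add_sub_cancel' hab]
  rw [hb, h, ← Ideal.zero_eq_bot, zero_mul]

lemma myNilpAdd {I J : Ideal R} {a b : ℕ} (ha : I ^ (a + 1) = ⊥) (hb : J ^ (b + 1) = ⊥) :
    (I + J) ^ (a + b + 1) = ⊥ := by
  rw [add_pow, ← Ideal.zero_eq_bot]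
  refine Finset.sum_eq_zero fun k hk => ?_
  rcases le_or_gt k a with h | h
  · have hJ : J ^ (a + b + 1 - k) = ⊥ := myPowEqBotMono hb (by omega)
    rw [hJ, ← Ideal.zero_eq_bot, mul_zero, zero_mul]
  · have hI : I ^ k = ⊥ := myPowEqBotMono ha (by omega)
    rw [hI, ← Ideal.zero_eq_bot, zero_mul, zero_mul]

lemma mySumNilp {ι : Type*} (s : Finset ι) (f : ι → Ideal R) (r : ℕ)
    (h : ∀ i ∈ s, f i ^ (r + 1) = ⊥) : (∑ i ∈ s, f i) ^ (s.card * r + 1) = ⊥ := by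
  induction s using Finset.cons_induction_on with
  | empty => rw [Finset.sum_empty, Finset.card_empty, Nat.zero_mul, pow_one, Ideal.zero_eq_bot]
  | cons _ _ ha ih =>
    rename_i a s
    rw [Finset.sum_cons, Finset.card_cons]
    have he : (s.card + 1) * r + 1 = r + s.card * r + 1 := by ring
    rw [he]
    exact myNilpAdd (h a (Finset.mem_cons_self a s))
      (ih fun i hi => h i (Finset.mem_cons_of_mem hi))

lemma myProdMemPow (K : Ideal R) {ι : Type*} (s : Finset ι) (f : ι → R)
    (h : ∀ i ∈ s, f i ∈ K) : ∏ i ∈ s, f i ∈ K ^ s.card := by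
  induction s using Finset.cons_induction_on with
  | empty => simp [Ideal.one_eq_top]
  | cons _ _ ha ih =>
    rename_i a s
    rw [Finset.prod_cons, Finset.card_cons, pow_succ']
    exact Ideal.mul_mem_mul (h a (Finset.mem_cons_self a s))
      (ih fun i hi => h i (Finset.mem_cons_of_mem hi))

lemma myMemSum {ι : Type*} (s : Finset ι) (f : ι → Ideal R) {l : ι} (hl : l ∈ s) {x : R}
    (hx : x ∈ f l) : x ∈ ∑ i ∈ s, f i := by
  induction s using Finset.cons_induction_on with
  | empty => simp at hl
  | cons _ _ ha ih =>
    rename_i a s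
    rw [Finset.sum_cons, Ideal.add_eq_sup]
    rcases Finset.mem_cons.mp hl with h | h
    · exact Submodule.mem_sup_left (h ▸ hx)
    · exact Submodule.mem_sup_right (ih h)

end IdealLemmas



open Finset AddMonoidAlgebra

lemma myUpper {p : ℕ} (hp : p.Prime) (hodd : Odd p) (A5 : Finset ℕ)
    (hsub : A5 ⊆ Finset.Icc 1 (p - 1)) (hcard : A5.card = (p - 1) / 2) (d : ℕ)
    (g : Fin (2 * d + 1) → (Fin d → ZMod p)) : hasZeroComb A5 g := by
  classical
  haveI : Fact p.Prime := ⟨hp⟩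
  have hp2 : 2 ≤ p := hp.two_le
  have hp3 : 3 ≤ p := by
    rcases hodd with ⟨k, hk⟩
    omega
  have h2m : 2 * A5.card = p - 1 := by
    rw [hcard]
    obtain ⟨k, hk⟩ := hodd
    omega
  have hm1 : 1 ≤ A5.card := by omega
  have h0A : (0 : ℕ) ∉ A5 := fun h => by have := Finset.mem_Icc.mp (hsub h); omega
  -- characteristic p
  haveI hcharR : CharP (AddMonoidAlgebra (ZMod p) (Fin d → ZMod p)) p := by
    have hinj : Function.Injective (algebraMap (ZMod p) (AddMonoidAlgebra (ZMod p) (Fin d → ZMod p))) := (algebraMap (ZMod p) (AddMonoidAlgebra (ZMod p) (Fin d → ZMod p))).injective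
    exact charP_of_injective_algebraMap hinj p
  set T : Fin d → (AddMonoidAlgebra (ZMod p) (Fin d → ZMod p)) := fun l => AddMonoidAlgebra.single (Pi.single l (1 : ZMod p)) 1 with hT
  set J : Ideal (AddMonoidAlgebra (ZMod p) (Fin d → ZMod p)) := ∑ l : Fin d, Ideal.span {T l - 1} with hJ
  have hTJ : ∀ l, T l - 1 ∈ J := fun l =>
    myMemSum Finset.univ _ (Finset.mem_univ l) (Ideal.subset_span rfl)
  have hmul : ∀ x y : (AddMonoidAlgebra (ZMod p) (Fin d → ZMod p)), x - 1 ∈ J → y - 1 ∈ J → x * y - 1 ∈ J := by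
    intro x y hx hy
    have hxy : x * y - 1 = x * (y - 1) + (x - 1) := by ring
    rw [hxy]
    exact J.add_mem (J.mul_mem_left x hy) hx
  have hpowJ : ∀ x : (AddMonoidAlgebra (ZMod p) (Fin d → ZMod p)), x - 1 ∈ J → ∀ a : ℕ, x ^ a - 1 ∈ J := by
    intro x hx a
    induction a with
    | zero => simpa using J.zero_mem
    | succ a ih => rw [pow_succ]; exact hmul _ _ ih hx
  have hXg : ∀ h : (Fin d → ZMod p), AddMonoidAlgebra.single h (1 : ZMod p) - 1 ∈ J := by
    intro h
    have hrep : AddMonoidAlgebra.single h (1 : ZMod p) = ∏ l : Fin d, T l ^ (h l).val := by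
      have hsum : ∑ l : Fin d, (h l).val • Pi.single l (1 : ZMod p) = h := by
        funext x
        rw [Finset.sum_apply, Finset.sum_eq_single x]
        · rw [Pi.smul_apply, Pi.single_eq_same, nsmul_eq_mul, mul_one, ZMod.natCast_val,
            ZMod.cast_id]
        · intro l _ hl
          rw [Pi.smul_apply, Pi.single_eq_of_ne (Ne.symm hl), smul_zero]
        · intro hx; exact absurd (Finset.mem_univ x) hx
      have h1 : ∀ l : Fin d, T l ^ (h l).val
          = AddMonoidAlgebra.single ((h l).val • Pi.single l (1 : ZMod p))
            ((1 : ZMod p) ^ (h l).val) := fun l => AddMonoidAlgebra.single_pow _ _ _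
      rw [Finset.prod_congr rfl (fun l _ => h1 l), AddMonoidAlgebra.prod_single, hsum]
      simp
    rw [hrep]
    have : ∀ s : Finset (Fin d), (∏ l ∈ s, T l ^ (h l).val) - 1 ∈ J := by
      intro s
      induction s using Finset.cons_induction_on with
      | empty => simpa using J.zero_mem
      | cons _ _ ha ih =>
        rename_i a s
        rw [Finset.prod_cons]
        exact hmul _ _ (hpowJ _ (hTJ a) _) ih
    exact this Finset.univ
  have hTnil : ∀ l, (T l - 1) ^ p = 0 := by
    intro l
    rw [sub_pow_char, AddMonoidAlgebra.single_pow]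
    have hz : p • (Pi.single l (1 : ZMod p) : Fin d → ZMod p) = 0 := by
      funext x
      simp [nsmul_eq_mul, ZMod.natCast_self]
    rw [hz, one_pow, one_pow, AddMonoidAlgebra.one_def, sub_self]
  have hJnil : J ^ (d * (p - 1) + 1) = ⊥ := by
    have hq : p - 1 + 1 = p := by omega
    have := mySumNilp (R := AddMonoidAlgebra (ZMod p) (Fin d → ZMod p)) Finset.univ (fun l => Ideal.span {T l - 1}) (p - 1)
      (fun l _ => by
        rw [Ideal.span_singleton_pow, hq, hTnil l, Ideal.span_singleton_eq_bot.mpr rfl])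
    simp only [Finset.card_univ, Fintype.card_fin] at this; exact this
  -- enumeration of A5
  set mc := A5.card with hmc
  let σ : Fin mc ≃ {y // y ∈ A5} := (A5.equivFin).symm
  let α : Fin mc → ℕ := fun i => (σ i : ℕ)
  have hαmem : ∀ i, α i ∈ A5 := fun i => (σ i).2
  have hαbd : ∀ i, 1 ≤ α i ∧ α i ≤ p - 1 := fun i => Finset.mem_Icc.mp (hsub (hαmem i))
  have hαinj : Function.Injective α := fun i j hij => σ.injective (Subtype.ext hij)
  let v : Fin mc → ZMod p := fun i => (α i : ZMod p)
  have hvinj : Function.Injective v := by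
    intro i j hij
    apply hαinj
    have h1 : ((α i : ℕ) : ZMod p).val = α i := ZMod.val_cast_of_lt (by have := hαbd i; omega)
    have h2 : ((α j : ℕ) : ZMod p).val = α j := ZMod.val_cast_of_lt (by have := hαbd j; omega)
    rw [← h1, ← h2]
    show ((v i).val = (v j).val)
    rw [hij]
  set M : Matrix (Fin mc) (Fin mc) (ZMod p) :=
    Matrix.of fun i j => (descPochhammer (ZMod p) (j : ℕ)).eval (v i) with hM
  have hMdet : IsUnit M.det := by
    have h1 := Matrix.det_eval_matrixOfPolynomials_eq_det_vandermonde v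
      (fun j : Fin mc => descPochhammer (ZMod p) (j : ℕ))
      (fun j => descPochhammer_natDegree _ _)
      (fun j => monic_descPochhammer _ _)
    rw [hM, ← h1]
    exact (Matrix.det_vandermonde_ne_zero_iff.mpr hvinj).isUnit
  set b : Fin mc → ZMod p := fun j => if (j : ℕ) = 0 then -1 else 0 with hb
  set x : Fin mc → ZMod p := Matrix.vecMul b M⁻¹ with hxdef
  have hx : Matrix.vecMul x M = b := by
    rw [hxdef, Matrix.vecMul_vecMul, Matrix.nonsing_inv_mul M hMdet, Matrix.vecMul_one]
  set γ : ℕ → ZMod p := fun a =>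
    if a = 0 then 1 else if ha : a ∈ A5 then x (A5.equivFin ⟨a, ha⟩) else 0 with hγ
  have hγ0 : γ 0 = 1 := if_pos rfl
  have hγα : ∀ i, γ (α i) = x i := by
    intro i
    have h0 : α i ≠ 0 := by have := hαbd i; omega
    have h1 : γ (α i) = x (A5.equivFin ⟨α i, hαmem i⟩) := by
      rw [hγ]
      simp only [if_neg h0, dif_pos (hαmem i)]
    rw [h1]
    congr 1
    have h2 : (⟨α i, hαmem i⟩ : {y // y ∈ A5}) = σ i := rfl
    rw [h2]
    exact (A5.equivFin).apply_symm_apply i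
  set B := insert 0 A5 with hB
  have hBlt : ∀ a ∈ B, a < p := by
    intro a haB
    rcases Finset.mem_insert.mp haB with h | h
    · omega
    · have := Finset.mem_Icc.mp (hsub h); omega
  have hkey : ∀ j : ℕ, j < mc → ∑ a ∈ B, γ a * ((a.choose j : ZMod p)) = 0 := by
    intro j hj
    have hjp : j < p := by omega
    have hfac : ((j.factorial : ZMod p)) ≠ 0 := by
      rw [Ne, ZMod.natCast_eq_zero_iff]
      intro hdvd
      have := (Nat.Prime.dvd_factorial hp).mp hdvd
      omega
    have hmain : ∑ a ∈ B, γ a * ((a.descFactorial j : ZMod p)) = 0 := by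
      rw [hB, Finset.sum_insert h0A]
      have hre : ∑ a ∈ A5, γ a * ((a.descFactorial j : ZMod p))
          = ∑ i : Fin mc, x i * M i ⟨j, hj⟩ := by
        rw [← Finset.sum_coe_sort A5 (fun a => γ a * ((Nat.descFactorial a j : ZMod p)))]
        rw [← Equiv.sum_comp σ
          (fun t : {y // y ∈ A5} => γ (t : ℕ) * (((t : ℕ).descFactorial j : ZMod p)))]
        apply Finset.sum_congr rfl
        intro i _
        rw [hγα i]
        congr 1
        show ((α i).descFactorial j : ZMod p) = (descPochhammer (ZMod p) j).eval (v i)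
        rw [descPochhammer_eval_eq_descFactorial]
      rw [hre]
      have hvm : ∑ i : Fin mc, x i * M i ⟨j, hj⟩ = Matrix.vecMul x M ⟨j, hj⟩ := rfl
      rw [hvm, hx]
      rcases Nat.eq_zero_or_pos j with h0 | h0
      · subst h0
        simp [hb, hγ0]
      · obtain ⟨jj, rfl⟩ := Nat.exists_eq_succ_of_ne_zero h0.ne'
        have hbj : b ⟨jj + 1, hj⟩ = 0 := by
          rw [hb]; simp
        rw [hbj, Nat.zero_descFactorial_succ]
        simp
    have hconv : ∀ a : ℕ, ((a.descFactorial j : ZMod p))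
        = (j.factorial : ZMod p) * (a.choose j : ZMod p) := by
      intro a
      rw [← Nat.cast_mul, Nat.descFactorial_eq_factorial_mul_choose]
    have hfactored : (j.factorial : ZMod p) * (∑ a ∈ B, γ a * ((a.choose j : ZMod p))) = 0 := by
      rw [Finset.mul_sum, ← hmain]
      apply Finset.sum_congr rfl
      intro a _
      rw [hconv a]
      ring
    rcases mul_eq_zero.mp hfactored with h | h
    · exact absurd h hfac
    · exact h
  -- the ring elements
  set Y : Fin (2 * d + 1) → (AddMonoidAlgebra (ZMod p) (Fin d → ZMod p)) := fun i => AddMonoidAlgebra.single (g i) 1 - 1 with hYdef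
  have hYJ : ∀ i, Y i ∈ J := fun i => hXg (g i)
  set w : Fin (2 * d + 1) → (AddMonoidAlgebra (ZMod p) (Fin d → ZMod p)) := fun i => ∑ a ∈ B, AddMonoidAlgebra.single (a • g i) (γ a) with hw
  have hstepA : ∀ (i : Fin (2 * d + 1)), ∀ a ∈ B, AddMonoidAlgebra.single (a • g i) (1 : ZMod p)
      = ∑ k ∈ Finset.range p, (a.choose k : (AddMonoidAlgebra (ZMod p) (Fin d → ZMod p))) * Y i ^ k := by
    intro i a ha
    have h2 : AddMonoidAlgebra.single (g i) (1 : ZMod p) = Y i + 1 := by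
      rw [hYdef]; ring
    calc AddMonoidAlgebra.single (a • g i) (1 : ZMod p)
        = (AddMonoidAlgebra.single (g i) (1 : ZMod p)) ^ a := by
          rw [AddMonoidAlgebra.single_pow, one_pow]
      _ = (Y i + 1) ^ a := by rw [h2]
      _ = ∑ k ∈ Finset.range (a + 1), Y i ^ k * 1 ^ (a - k) * (a.choose k : (AddMonoidAlgebra (ZMod p) (Fin d → ZMod p))) := add_pow _ _ _
      _ = ∑ k ∈ Finset.range (a + 1), (a.choose k : (AddMonoidAlgebra (ZMod p) (Fin d → ZMod p))) * Y i ^ k := by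
          apply Finset.sum_congr rfl
          intro k _
          rw [one_pow, mul_one, mul_comm]
      _ = ∑ k ∈ Finset.range p, (a.choose k : (AddMonoidAlgebra (ZMod p) (Fin d → ZMod p))) * Y i ^ k := by
          apply Finset.sum_subset (Finset.range_subset_range.mpr (hBlt a ha))
          intro k hk hknot
          have hlt : a < k := by
            simp only [Finset.mem_range] at hk hknot
            omega
          rw [Nat.choose_eq_zero_of_lt hlt, Nat.cast_zero, zero_mul]
  set κ : ℕ → ZMod p := fun k => ∑ a ∈ B, γ a * (a.choose k : ZMod p) with hκ
  have hcastR : ∀ cn : ℕ, (cn : (AddMonoidAlgebra (ZMod p) (Fin d → ZMod p))) = AddMonoidAlgebra.single (0 : (Fin d → ZMod p)) ((cn : ZMod p)) := by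
    intro cn
    have := map_natCast (AddMonoidAlgebra.singleZeroRingHom : ZMod p →+* (AddMonoidAlgebra (ZMod p) (Fin d → ZMod p))) cn
    rw [← this]
    rfl
  have hwY : ∀ i, w i = ∑ k ∈ Finset.range p, AddMonoidAlgebra.single (0 : (Fin d → ZMod p)) (κ k) * Y i ^ k := by
    intro i
    rw [hw]
    simp only
    have h1 : ∀ a ∈ B, AddMonoidAlgebra.single (a • g i) (γ a)
        = AddMonoidAlgebra.single (0 : (Fin d → ZMod p)) (γ a) * AddMonoidAlgebra.single (a • g i) 1 := by
      intro a _
      rw [AddMonoidAlgebra.single_mul_single, zero_add, mul_one]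
    rw [Finset.sum_congr rfl h1]
    rw [Finset.sum_congr rfl (fun a ha => by rw [hstepA i a ha, Finset.mul_sum])]
    rw [Finset.sum_comm]
    apply Finset.sum_congr rfl
    intro k _
    have h2 : ∀ a : ℕ, (AddMonoidAlgebra.single (0 : (Fin d → ZMod p)) (γ a)) * ((a.choose k : (AddMonoidAlgebra (ZMod p) (Fin d → ZMod p))) * Y i ^ k)
        = AddMonoidAlgebra.single (0 : (Fin d → ZMod p)) (γ a * (a.choose k : ZMod p)) * Y i ^ k := by
      intro a
      rw [← mul_assoc, hcastR (a.choose k), AddMonoidAlgebra.single_mul_single, zero_add]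
    rw [Finset.sum_congr rfl (fun a _ => h2 a), ← Finset.sum_mul]
    congr 1
    rw [hκ]
    apply AddMonoidAlgebra.coeff_injective
    simp only [AddMonoidAlgebra.coeff_sum, AddMonoidAlgebra.coeff_single]
    exact (Finsupp.single_finset_sum _ _ _).symm
  have hwmem : ∀ i, w i ∈ J ^ mc := by
    intro i
    rw [hwY i]
    apply Ideal.sum_mem
    intro k _
    rcases lt_or_ge k mc with hlt | hge
    · have hκ0 : κ k = 0 := hkey k hlt
      have hz : AddMonoidAlgebra.single (0 : Fin d → ZMod p) (κ k)
          = (0 : AddMonoidAlgebra (ZMod p) (Fin d → ZMod p)) := by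
        rw [hκ0]; exact AddMonoidAlgebra.single_zero _
      rw [hz, zero_mul]
      exact Submodule.zero_mem _
    · exact Ideal.mul_mem_left _ _ (Ideal.pow_le_pow_right hge (Ideal.pow_mem_pow (hYJ i) k))
  have hP : ∏ i : Fin (2 * d + 1), w i = 0 := by
    have h1 : ∏ i : Fin (2 * d + 1), w i ∈ (J ^ mc) ^ (Finset.univ : Finset (Fin (2 * d + 1))).card :=
      myProdMemPow (J ^ mc) Finset.univ w (fun i _ => hwmem i)
    rw [Finset.card_univ, Fintype.card_fin, ← pow_mul] at h1
    have hexp : d * (p - 1) + 1 ≤ mc * (2 * d + 1) := by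
      have he : mc * (2 * d + 1) = (2 * mc) * d + mc := by ring
      rw [he, h2m]
      have : d * (p - 1) = (p - 1) * d := by ring
      omega
    have h2 : J ^ (mc * (2 * d + 1)) ≤ J ^ (d * (p - 1) + 1) := Ideal.pow_le_pow_right hexp
    rw [← Ideal.mem_bot, ← hJnil]
    exact h2 h1
  have hPexp : ∏ i : Fin (2 * d + 1), w i = ∑ φ ∈ Fintype.piFinset (fun _ : Fin (2 * d + 1) => B),
      AddMonoidAlgebra.single (∑ i, φ i • g i) (∏ i, γ (φ i)) := by
    rw [hw]
    simp only
    rw [Finset.prod_univ_sum (fun _ : Fin (2 * d + 1) => B)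
      (fun i a => AddMonoidAlgebra.single (a • g i) (γ a))]
    apply Finset.sum_congr rfl
    intro φ _
    rw [AddMonoidAlgebra.prod_single]
  have hcoeff : ∑ φ ∈ Fintype.piFinset (fun _ : Fin (2 * d + 1) => B),
      (if (∑ i, φ i • g i) = (0 : (Fin d → ZMod p)) then (∏ i, γ (φ i)) else 0) = 0 := by
    have h0 : (∏ i : Fin (2 * d + 1), w i : (AddMonoidAlgebra (ZMod p) (Fin d → ZMod p))).coeff 0 = 0 := by rw [hP]; rfl
    rw [hPexp, AddMonoidAlgebra.coeff_sum, Finsupp.finset_sum_apply] at h0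
    calc ∑ φ ∈ Fintype.piFinset (fun _ : Fin (2 * d + 1) => B),
        (if (∑ i, φ i • g i) = (0 : (Fin d → ZMod p)) then (∏ i, γ (φ i)) else 0)
        = ∑ φ ∈ Fintype.piFinset (fun _ : Fin (2 * d + 1) => B),
          (AddMonoidAlgebra.single (∑ i, φ i • g i) (∏ i, γ (φ i)) : AddMonoidAlgebra (ZMod p) (Fin d → ZMod p)).coeff 0 :=
          Finset.sum_congr rfl (fun φ _ => (Finsupp.single_apply).symm)
      _ = 0 := h0
  by_contra hcon
  have hne : ∀ φ ∈ Fintype.piFinset (fun _ : Fin (2 * d + 1) => B), φ ≠ (fun _ => 0) →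
      (∑ i, φ i • g i) ≠ 0 := by
    intro φ hφ hφ0 hzero
    apply hcon
    refine ⟨Finset.univ.filter (fun i => φ i ≠ 0), ?_, φ, ?_, ?_⟩
    · obtain ⟨i, hi⟩ := Function.ne_iff.mp hφ0
      exact ⟨i, Finset.mem_filter.mpr ⟨Finset.mem_univ i, hi⟩⟩
    · intro i hi
      have hmem := (Fintype.mem_piFinset.mp hφ) i
      have hne0 := (Finset.mem_filter.mp hi).2
      rcases Finset.mem_insert.mp hmem with h | h
      · exact absurd h hne0
      · exact h
    · rw [Finset.sum_filter_of_ne]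
      · exact hzero
      · intro i _ hfne
        intro h0
        exact hfne (by rw [h0, zero_smul])
  have hmem0 : (fun _ : Fin (2 * d + 1) => (0 : ℕ)) ∈ Fintype.piFinset (fun _ : Fin (2 * d + 1) => B) :=
    Fintype.mem_piFinset.mpr (fun _ => Finset.mem_insert_self 0 A5)
  have hsingle := Finset.sum_eq_single_of_mem (f := fun φ : Fin (2 * d + 1) → ℕ =>
      (if (∑ i, φ i • g i) = (0 : (Fin d → ZMod p)) then (∏ i, γ (φ i)) else 0))
    (fun _ : Fin (2 * d + 1) => (0 : ℕ)) hmem0 (fun φ hφ hφne => if_neg (hne φ hφ hφne))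
  have hfin := hsingle.symm.trans hcoeff
  simp [hγ0] at hfin



lemma myLower {p d t : ℕ} (hp : p.Prime) (A5 : Finset ℕ)
    (hsub : A5 ⊆ Finset.Icc 1 (p - 1)) (hsym : ∀ x ∈ A5, p - x ∉ A5)
    (ht : t ≤ 2 * d) :
    ∃ g : Fin t → (Fin d → ZMod p), ¬ hasZeroComb A5 g := by
  haveI : Fact p.Prime := ⟨hp⟩
  have hd0 : ∀ i : Fin t, i.val / 2 < d := fun i => by omega
  set f : Fin t → Fin d := fun i => ⟨i.val / 2, hd0 i⟩ with hfdef
  refine ⟨fun i => Pi.single (f i) (1 : ZMod p), ?_⟩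
  rintro ⟨s, hs, a, ha, hsum⟩
  obtain ⟨i₀, hi₀⟩ := hs
  set j : Fin d := f i₀ with hj
  have hbound : ∀ i ∈ s, 1 ≤ a i ∧ a i ≤ p - 1 := by
    intro i hi
    exact Finset.mem_Icc.mp (hsub (ha i hi))
  have hcoord : ∑ i ∈ s.filter (fun i => f i = j), ((a i : ZMod p)) = 0 := by
    have h1 := congrFun hsum j
    rw [Finset.sum_apply] at h1
    have h2 : ∀ i ∈ s, ((a i • Pi.single (f i) (1 : ZMod p) : Fin d → ZMod p)) j
        = if f i = j then ((a i : ZMod p)) else 0 := by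
      intro i _
      rw [Pi.smul_apply, Pi.single_apply]
      by_cases h : f i = j
      · simp [h, nsmul_eq_mul]
      · simp [h, Ne.symm h]
    rw [Finset.sum_congr rfl h2] at h1
    rw [Finset.sum_filter]
    exact h1
  set F := s.filter (fun i => f i = j) with hF
  have hi₀F : i₀ ∈ F := Finset.mem_filter.mpr ⟨hi₀, rfl⟩
  have hFs : F ⊆ s := Finset.filter_subset _ _
  have hvals : ∀ i ∈ F, i.val / 2 = j.val := by
    intro i hi
    have := (Finset.mem_filter.mp hi).2
    exact congrArg Fin.val this
  have hcard2 : F.card ≤ 2 := by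
    have : F.card ≤ (Finset.range 2).card := by
      apply Finset.card_le_card_of_injOn (fun i => i.val % 2)
      · intro i hi; simp [Nat.mod_lt _ (by norm_num : 0 < 2)]
      · intro i1 h1 i2 h2 hmod
        have e1 := hvals i1 h1
        have e2 := hvals i2 h2
        apply Fin.ext
        simp only at hmod
        omega
    simpa using this
  have hcard1 : 1 ≤ F.card := Finset.card_pos.mpr ⟨i₀, hi₀F⟩
  have hczero : ∀ i ∈ F, ((a i : ZMod p)) ≠ 0 := by
    intro i hi hz
    rw [ZMod.natCast_eq_zero_iff] at hz
    have := hbound i (hFs hi)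
    have := Nat.le_of_dvd (by omega) hz
    omega
  interval_cases hc : F.card
  · obtain ⟨i₁, h1⟩ := Finset.card_eq_one.mp hc
    rw [h1, Finset.sum_singleton] at hcoord
    exact hczero i₁ (h1 ▸ Finset.mem_singleton_self i₁) hcoord
  · obtain ⟨i₁, i₂, hne, h2⟩ := Finset.card_eq_two.mp hc
    have hm1 : i₁ ∈ F := h2 ▸ Finset.mem_insert_self _ _
    have hm2 : i₂ ∈ F := h2 ▸ Finset.mem_insert_of_mem (Finset.mem_singleton_self i₂)
    rw [h2, Finset.sum_pair hne] at hcoord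
    have hdvd : p ∣ a i₁ + a i₂ := by
      rw [← ZMod.natCast_eq_zero_iff]
      push_cast
      exact hcoord
    have hb1 := hbound i₁ (hFs hm1)
    have hb2 := hbound i₂ (hFs hm2)
    have hpp : 2 ≤ p := hp.two_le
    have hsumeq : a i₁ + a i₂ = p := by
      have hle : p ≤ a i₁ + a i₂ := Nat.le_of_dvd (by omega) hdvd
      have hsub : p ∣ (a i₁ + a i₂ - p) := Nat.dvd_sub hdvd dvd_rfl
      have := Nat.eq_zero_of_dvd_of_lt hsub (by omega)
      omega
      
    have : a i₂ = p - a i₁ := by omega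
    exact hsym (a i₁) (ha i₁ (hFs hm1)) (this ▸ ha i₂ (hFs hm2))

theorem stmt8 {p d : ℕ} (hp : p.Prime) (hodd : Odd p) (hd : 1 ≤ d)
    (A5 : Finset ℕ) (hsub : A5 ⊆ Finset.Icc 1 (p - 1))
    (hcard : A5.card = (p - 1) / 2)
    (hsym : ∀ x ∈ A5, p - x ∉ A5) :
    IsLeast {t : ℕ | ∀ g : Fin t → (Fin d → ZMod p), hasZeroComb A5 g}
      (2 * d + 1) := by
  constructor
  · intro g
    exact myUpper hp hodd A5 hsub hcard d g
  · intro t ht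
    by_contra hlt
    push_neg at hlt
    obtain ⟨g, hg⟩ := myLower (d := d) (t := t) hp A5 hsub hsym (by omega)
    exact hg (ht g)
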